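/- Let F : ℝ^m → ℂ^N be twice continuously differentiable, let y ∈ ℂ^N, and define φ(θ) = (1/2)‖F(θ) - y‖². Suppose θ̂ ∈ ℝ^m satisfies: DF(θ̂) is injective with smallest singular value σ_min > 0, ‖F(θ̂) - y‖ < σ, and σ·‖ξ‖ ≤ σ_min², where ξ = (‖∇²F_1(θ̂)‖_op, …, ‖∇²F_N(θ̂)‖_op) (componentwise Hessian operator norms). Then the Hessian ∇²φ(θ̂) is positive definite. -/

import Mathlib

open scoped Real InnerProductSpace

/-- The real inner product on `ℂ` as a continuous real-bilinear map. -/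
noncomputable def realInnerCLM : ℂ →L[ℝ] ℂ →L[ℝ] ℝ :=
  LinearMap.mkContinuous₂
    (LinearMap.mk₂ ℝ (fun a b => (inner ℝ a b : ℝ))
      (fun a a' b => by simp [Complex.inner, Complex.ext_iff]; ring)
      (fun r a b => by simp [Complex.inner, Complex.ext_iff]; ring)
      (fun a b b' => by simp [Complex.inner, Complex.ext_iff]; ring)
      (fun r a b => by simp [Complex.inner, Complex.ext_iff]; ring))
    1 (fun a b => by simpa using abs_real_inner_le_norm a b)

@[simp] lemma realInnerCLM_apply (a b : ℂ) : realInnerCLM a b = ⟪a, b⟫_ℝ := rfl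

set_option maxHeartbeats 4000000 in
theorem hessian_positive_definite (m N : ℕ)
    (F : EuclideanSpace ℝ (Fin m) → EuclideanSpace ℂ (Fin N))
    (hF : ContDiff ℝ 2 F) (y : EuclideanSpace ℂ (Fin N))
    (θhat : EuclideanSpace ℝ (Fin m)) (σ smin : ℝ)
    (hsminpos : 0 < smin)
    (hsmin : ∀ z : EuclideanSpace ℝ (Fin m), smin * ‖z‖ ≤ ‖fderiv ℝ F θhat z‖)
    (hadm : ‖F θhat - y‖ < σ)
    (hbound : σ * Real.sqrt (∑ k : Fin N,
        ‖fderiv ℝ (fderiv ℝ (fun θ => F θ k)) θhat‖ ^ 2) ≤ smin ^ 2) :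
    ∀ z : EuclideanSpace ℝ (Fin m), z ≠ 0 →
      0 < fderiv ℝ (fderiv ℝ (fun θ => (1 / 2) * ‖F θ - y‖ ^ 2)) θhat z z := by
  intro z hz
  have hgk2 : ∀ k : Fin N, ContDiff ℝ 2 (fun θ : EuclideanSpace ℝ (Fin m) => F θ k) := fun k =>
    ((EuclideanSpace.proj (𝕜 := ℂ) k).restrictScalars ℝ).contDiff.comp hF
  set Dk : Fin N → EuclideanSpace ℝ (Fin m) → (EuclideanSpace ℝ (Fin m) →L[ℝ] ℂ) :=
    fun k => fderiv ℝ (fun θ => F θ k) with hDk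
  have hDk1 : ∀ k, ContDiff ℝ 1 (Dk k) := fun k => (hgk2 k).fderiv_right (le_refl 2)
  set Hk : Fin N → (EuclideanSpace ℝ (Fin m) →L[ℝ] EuclideanSpace ℝ (Fin m) →L[ℝ] ℂ) :=
    fun k => fderiv ℝ (Dk k) θhat with hHk
  set fk : Fin N → EuclideanSpace ℝ (Fin m) → ℂ := fun k θ => F θ k - y k with hfk
  have hfk' : ∀ k θ, HasFDerivAt (fk k) (Dk k θ) θ := fun k θ =>
    (((hgk2 k).differentiable (by norm_num) θ).hasFDerivAt).sub_const _
  set L : EuclideanSpace ℝ (Fin m) → (EuclideanSpace ℝ (Fin m) →L[ℝ] ℝ) :=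
    fun θ => ∑ k, (realInnerCLM (fk k θ)).comp (Dk k θ) with hL
  -- Step 1 : first derivative
  have step1 : ∀ θ, HasFDerivAt (fun θ => (1 / 2 : ℝ) * ‖F θ - y‖ ^ 2) (L θ) θ := by
    intro θ
    have h1 : HasFDerivAt (fun θ => ∑ k, ⟪fk k θ, fk k θ⟫_ℝ)
        (∑ k, (fderivInnerCLM ℝ (fk k θ, fk k θ)).comp ((Dk k θ).prod (Dk k θ))) θ :=
      HasFDerivAt.fun_sum fun k _ => (hfk' k θ).inner ℝ (hfk' k θ)
    have h2 := h1.const_mul (1 / 2 : ℝ)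
    have hfun : (fun θ : EuclideanSpace ℝ (Fin m) => (1 / 2 : ℝ) * ‖F θ - y‖ ^ 2)
        = fun θ => (1 / 2 : ℝ) * ∑ k, ⟪fk k θ, fk k θ⟫_ℝ := by
      funext θ
      congr 1
      simp only [real_inner_self_eq_norm_sq]
      rw [EuclideanSpace.norm_eq, Real.sq_sqrt (by positivity)]
      simp [hfk]
    rw [hfun]
    refine h2.congr_fderiv (Eq.symm ?_)
    ext w
    simp only [hL, ContinuousLinearMap.coe_smul', Pi.smul_apply,
      ContinuousLinearMap.sum_apply, ContinuousLinearMap.coe_comp', Function.comp_apply,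
      fderivInnerCLM_apply, ContinuousLinearMap.prod_apply, realInnerCLM_apply, smul_eq_mul,
      Finset.mul_sum]
    refine Finset.sum_congr rfl fun k _ => ?_
    rw [real_inner_comm (Dk k θ w) (fk k θ)]
    ring
  have hfd : fderiv ℝ (fun θ => (1 / 2 : ℝ) * ‖F θ - y‖ ^ 2) = L :=
    funext fun θ => (step1 θ).fderiv
  -- Step 2 : second derivative
  set M : EuclideanSpace ℝ (Fin m) →L[ℝ] (EuclideanSpace ℝ (Fin m) →L[ℝ] ℝ) := ∑ k,
      ((ContinuousLinearMap.compL ℝ (EuclideanSpace ℝ (Fin m)) ℂ ℝ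
          (realInnerCLM (fk k θhat))).comp (Hk k)
        + ((ContinuousLinearMap.compL ℝ (EuclideanSpace ℝ (Fin m)) ℂ ℝ).flip
            (Dk k θhat)).comp (realInnerCLM.comp (Dk k θhat))) with hM
  have step2 : HasFDerivAt L M θhat := by
    refine HasFDerivAt.fun_sum fun k _ => ?_
    have hc : HasFDerivAt (fun θ => realInnerCLM (fk k θ))
        (realInnerCLM.comp (Dk k θhat)) θhat :=
      realInnerCLM.hasFDerivAt.comp θhat (hfk' k θhat)
    have hd : HasFDerivAt (Dk k) (Hk k) θhat :=
      (((hDk1 k).differentiable one_ne_zero) θhat).hasFDerivAt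
    exact hc.clm_comp hd
  have hval : fderiv ℝ (fderiv ℝ (fun θ => (1 / 2 : ℝ) * ‖F θ - y‖ ^ 2)) θhat z z
      = ∑ k, (⟪fk k θhat, Hk k z z⟫_ℝ + ⟪Dk k θhat z, Dk k θhat z⟫_ℝ) := by
    rw [hfd, step2.fderiv]
    simp [hM, ContinuousLinearMap.sum_apply]
  rw [hval]
  -- Step 3 : relate ∑ ‖Dk z‖² to ‖DF z‖²
  have hFd : Differentiable ℝ F := hF.differentiable (by norm_num)
  have hproj : ∀ k, Dk k θhat = ((EuclideanSpace.proj (𝕜 := ℂ) k).restrictScalars ℝ).comp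
      (fderiv ℝ F θhat) := fun k =>
    (((EuclideanSpace.proj (𝕜 := ℂ) k).restrictScalars ℝ).hasFDerivAt.comp θhat
      (hFd θhat).hasFDerivAt).fderiv
  have hDFz : ‖fderiv ℝ F θhat z‖ ^ 2 = ∑ k, ‖Dk k θhat z‖ ^ 2 := by
    rw [EuclideanSpace.norm_eq, Real.sq_sqrt (by positivity)]
    refine Finset.sum_congr rfl fun k _ => ?_
    rw [hproj k]; rfl
  -- Step 4 : the inequality
  have hA : smin ^ 2 * ‖z‖ ^ 2 ≤ ∑ k, ⟪Dk k θhat z, Dk k θhat z⟫_ℝ := by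
    have h1 : (smin * ‖z‖) ^ 2 ≤ ‖fderiv ℝ F θhat z‖ ^ 2 :=
      pow_le_pow_left₀ (by positivity) (hsmin z) 2
    calc smin ^ 2 * ‖z‖ ^ 2 = (smin * ‖z‖) ^ 2 := by ring
      _ ≤ ‖fderiv ℝ F θhat z‖ ^ 2 := h1
      _ = ∑ k, ‖Dk k θhat z‖ ^ 2 := hDFz
      _ = ∑ k, ⟪Dk k θhat z, Dk k θhat z⟫_ℝ := by
          simp [real_inner_self_eq_norm_sq]
  set S := Real.sqrt (∑ k : Fin N, ‖Hk k‖ ^ 2) with hS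
  have hbound' : σ * S ≤ smin ^ 2 := hbound
  have hSnonneg : 0 ≤ S := Real.sqrt_nonneg _
  have hGnorm : ‖F θhat - y‖ ^ 2 = ∑ k, ‖fk k θhat‖ ^ 2 := by
    rw [EuclideanSpace.norm_eq, Real.sq_sqrt (by positivity)]
    refine Finset.sum_congr rfl fun k _ => ?_
    simp [hfk]
  have hG0 : (0:ℝ) ≤ ‖F θhat - y‖ := norm_nonneg _
  have hz2 : (0:ℝ) < ‖z‖ ^ 2 := pow_pos (norm_pos_iff.mpr hz) 2
  have hB : |∑ k, ⟪fk k θhat, Hk k z z⟫_ℝ| ≤ ‖F θhat - y‖ * S * ‖z‖ ^ 2 := by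
    calc |∑ k, ⟪fk k θhat, Hk k z z⟫_ℝ| ≤ ∑ k, |⟪fk k θhat, Hk k z z⟫_ℝ| :=
          Finset.abs_sum_le_sum_abs _ _
      _ ≤ ∑ k, ‖fk k θhat‖ * (‖Hk k‖ * ‖z‖ ^ 2) := by
          refine Finset.sum_le_sum fun k _ => ?_
          refine (abs_real_inner_le_norm _ _).trans ?_
          refine mul_le_mul_of_nonneg_left ?_ (norm_nonneg _)
          calc ‖Hk k z z‖ ≤ ‖Hk k z‖ * ‖z‖ := (Hk k z).le_opNorm z
            _ ≤ ‖Hk k‖ * ‖z‖ * ‖z‖ :=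
                mul_le_mul_of_nonneg_right ((Hk k).le_opNorm z) (norm_nonneg z)
            _ = ‖Hk k‖ * ‖z‖ ^ 2 := by ring
      _ = (∑ k, ‖fk k θhat‖ * ‖Hk k‖) * ‖z‖ ^ 2 := by
          rw [Finset.sum_mul]; refine Finset.sum_congr rfl fun k _ => ?_; ring
      _ ≤ ‖F θhat - y‖ * S * ‖z‖ ^ 2 := by
          refine mul_le_mul_of_nonneg_right ?_ hz2.le
          have hcs := Finset.sum_mul_sq_le_sq_mul_sq Finset.univ
            (fun k => ‖fk k θhat‖) (fun k => ‖Hk k‖)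
          refine le_trans (le_abs_self _) ?_
          rw [← Real.sqrt_sq_eq_abs]
          refine (Real.sqrt_le_sqrt hcs).trans ?_
          rw [Real.sqrt_mul (by positivity), ← hGnorm, Real.sqrt_sq hG0, hS]
  rw [Finset.sum_add_distrib]
  rcases eq_or_lt_of_le hSnonneg with hS0 | hS0
  · have hB0 : ∑ k, ⟪fk k θhat, Hk k z z⟫_ℝ = 0 := by
      have h1 : |∑ k, ⟪fk k θhat, Hk k z z⟫_ℝ| ≤ 0 := by
        rw [← hS0] at hB; simpa using hB
      exact abs_eq_zero.mp (le_antisymm h1 (abs_nonneg _))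
    rw [hB0]
    have : 0 < smin ^ 2 * ‖z‖ ^ 2 := by positivity
    linarith
  · have h1 : ‖F θhat - y‖ * S * ‖z‖ ^ 2 < σ * S * ‖z‖ ^ 2 := by
      have := mul_lt_mul_of_pos_right (mul_lt_mul_of_pos_right hadm hS0) hz2
      linarith
    have h2 : σ * S * ‖z‖ ^ 2 ≤ smin ^ 2 * ‖z‖ ^ 2 :=
      mul_le_mul_of_nonneg_right hbound' hz2.le
    have h3 := abs_le.mp hB
    linarith [h3.1, hA]
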